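/- arXiv:1602.07085 — 4 statements merged into one kernel-verified Lean document; each statement's English description precedes it below -/
import Mathlib

section
/- Let R be a commutative ring, let λ ∈ R, let A and C be λ-circulant n×n matrices over R, and let J be the back-diagonal permutation matrix of order n (with entries J_{i,n-i+1}=1 and 0 elsewhere). Then the matrix C' = C·J is symmetric, i.e., (C·J)ᵀ = C·J. -/
open Matrix Polynomial

/-- The `l`-circulant matrix with first row `a`: each row is the `l`-cyclic
shift of the previous one (last entry wraps to the front multiplied by `l`). -/
def lamCirc {R : Type*} [CommRing R] (n : ℕ) (l : R) (a : Fin n → R) :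
    Matrix (Fin n) (Fin n) R :=
  fun i j =>
    if h : (i : ℕ) ≤ (j : ℕ) then a ⟨(j : ℕ) - (i : ℕ), by have := j.isLt; omega⟩
    else l * a ⟨n + (j : ℕ) - (i : ℕ), by have := i.isLt; have := j.isLt; omega⟩

/-- `A` is an `l`-circulant matrix. -/
def IsLamCirc {R : Type*} [CommRing R] (n : ℕ) (l : R) (A : Matrix (Fin n) (Fin n) R) : Prop :=
  ∃ a : Fin n → R, A = lamCirc n l a

/-- The back-diagonal permutation matrix `J` with `J_{i, n-i+1} = 1` (1-indexed). -/
def backDiag {R : Type*} [CommRing R] (n : ℕ) : Matrix (Fin n) (Fin n) R :=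
  fun i j => if (i : ℕ) + (j : ℕ) + 1 = n then 1 else 0

/-- For λ-circulant matrices A, C, the matrix C·J is symmetric. -/
theorem backDiag_mul_symmetric {R : Type*} [CommRing R] {n : ℕ} (l : R)
    (A C : Matrix (Fin n) (Fin n) R)
    (hA : IsLamCirc n l A) (hC : IsLamCirc n l C) :
    (C * backDiag n)ᵀ = C * backDiag n := by
  obtain ⟨c, rfl⟩ := hC
  ext i j
  have hn : 0 < n := i.pos
  have hi := i.isLt
  have hj := j.isLt
  simp only [transpose_apply, mul_apply, backDiag, mul_ite, mul_one, mul_zero]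
  rw [Finset.sum_eq_single (⟨n - 1 - (i : ℕ), by omega⟩ : Fin n),
      Finset.sum_eq_single (⟨n - 1 - (j : ℕ), by omega⟩ : Fin n)]
  · simp only [if_pos (by simp; omega : ((⟨n - 1 - (i : ℕ), by omega⟩ : Fin n) : ℕ) + (i:ℕ) + 1 = n),
      if_pos (by simp; omega : ((⟨n - 1 - (j : ℕ), by omega⟩ : Fin n) : ℕ) + (j:ℕ) + 1 = n)]
    unfold lamCirc
    by_cases h : (j : ℕ) ≤ n - 1 - (i : ℕ)
    · rw [dif_pos h, dif_pos (by simp only [Fin.val_mk]; omega)]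
      exact congrArg c (Fin.ext (by simp only [Fin.val_mk]; omega))
    · rw [dif_neg h, dif_neg (by simp only [Fin.val_mk]; omega)]
      exact congrArg (l * c ·) (Fin.ext (by simp only [Fin.val_mk]; omega))
  · intro b _ hb
    rw [if_neg]
    intro h
    exact hb (Fin.ext (by simp; omega))
  · simp
  · intro b _ hb
    rw [if_neg]
    intro h
    exact hb (Fin.ext (by simp; omega))
  · simp
end

section
/- Let R be a commutative ring, let λ ∈ R, let A and C be λ-circulant n×n matrices over R, and let J be the back-diagonal permutation matrix of order n. Then A·(C·J) = (C·J)·Aᵀ; equivalently, A·J·Cᵀ = C·J·Aᵀ. -/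
open Matrix Polynomial

private lemma mod3 (x n : ℕ) (h : x < 3 * n) :
    x % n = if x < n then x else if x < 2 * n then x - n else x - 2 * n := by
  split_ifs with h1 h2
  · exact Nat.mod_eq_of_lt h1
  · rw [Nat.mod_eq_sub_mod (by omega), Nat.mod_eq_of_lt (by omega)]
  · rw [Nat.mod_eq_sub_mod (by omega), Nat.mod_eq_sub_mod (by omega),
      Nat.mod_eq_of_lt (by omega)]
    omega

private def idx {n : ℕ} (i : Fin n) (m : ℕ) : Fin n := ⟨m % n, Nat.mod_lt _ i.pos⟩

private lemma idx_congr {n : ℕ} (i i' : Fin n) {m m' : ℕ} (h : m % n = m' % n) :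
    idx i m = idx i' m' := Fin.ext h

private lemma lamCirc_apply' {R : Type*} [CommRing R] {n : ℕ} (l : R) (a : Fin n → R)
    (i j : Fin n) :
    lamCirc n l a i j = (if (i : ℕ) ≤ (j : ℕ) then 1 else l) * a (idx i (n + (j:ℕ) - (i:ℕ))) := by
  unfold lamCirc idx
  split_ifs with h
  · rw [one_mul]
    refine congrArg a (Fin.ext ?_)
    show (j:ℕ) - i = (n + (j:ℕ) - i) % n
    rw [mod3 _ n (by omega)]
    have := i.isLt; have := j.isLt
    split_ifs <;> omega
  · refine congrArg (fun t => l * a t) (Fin.ext ?_)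
    show n + (j:ℕ) - i = (n + (j:ℕ) - i) % n
    rw [mod3 _ n (by omega)]
    have := i.isLt; have := j.isLt
    split_ifs <;> omega

private def g {n : ℕ} (i j k : Fin n) : Fin n :=
  ⟨((i:ℕ) + (j:ℕ) + (n - (k:ℕ))) % n, Nat.mod_lt _ k.pos⟩

private lemma g_invol {n : ℕ} (i j k : Fin n) : g i j (g i j k) = k := by
  have hi := i.isLt; have hj := j.isLt; have hk := k.isLt
  refine Fin.ext ?_
  show ((i:ℕ) + j + (n - (((i:ℕ) + j + (n - k)) % n))) % n = k
  have h1 := mod3 ((i:ℕ) + j + (n - k)) n (by omega)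
  rw [h1, mod3 _ n (by omega)]
  split_ifs <;> omega

private def gEquiv {n : ℕ} (i j : Fin n) : Equiv.Perm (Fin n) :=
  ⟨g i j, g i j, g_invol i j, g_invol i j⟩

private lemma lamCirc_comm {R : Type*} [CommRing R] {n : ℕ} (l : R) (a c : Fin n → R) :
    lamCirc n l a * lamCirc n l c = lamCirc n l c * lamCirc n l a := by
  ext i j
  rw [Matrix.mul_apply, Matrix.mul_apply]
  refine Fintype.sum_equiv (gEquiv i j) _ _ (fun k => ?_)
  have hi := i.isLt; have hj := j.isLt; have hk := k.isLt
  show lamCirc n l a i k * lamCirc n l c k j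
      = lamCirc n l c i (g i j k) * lamCirc n l a (g i j k) j
  have hM : ((g i j k : Fin n) : ℕ) = ((i:ℕ) + j + (n - k)) % n := rfl
  rw [mod3 _ n (by omega)] at hM
  have hMlt : ((g i j k : Fin n) : ℕ) < n := (g i j k).isLt
  rw [lamCirc_apply', lamCirc_apply', lamCirc_apply', lamCirc_apply']
  have ha : idx i (n + (k:ℕ) - (i:ℕ)) = idx (g i j k) (n + (j:ℕ) - ((g i j k : Fin n):ℕ)) := by
    refine idx_congr _ _ ?_
    rw [mod3 _ n (by omega), mod3 _ n (by omega)]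
    split_ifs at hM ⊢ <;> omega
  have hc : idx k (n + (j:ℕ) - (k:ℕ)) = idx i (n + ((g i j k : Fin n):ℕ) - (i:ℕ)) := by
    refine idx_congr _ _ ?_
    rw [mod3 _ n (by omega), mod3 _ n (by omega)]
    split_ifs at hM ⊢ <;> omega
  rw [ha, hc]
  split_ifs at hM ⊢ <;> first | ring1 | (exfalso; omega)

private lemma lamCirc_persymm {R : Type*} [CommRing R] {n : ℕ} (l : R) (a : Fin n → R)
    (i j : Fin n) : lamCirc n l a i j = lamCirc n l a j.rev i.rev := by
  have hi := i.isLt; have hj := j.isLt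
  unfold lamCirc
  simp only [Fin.val_rev]
  split_ifs with h1 h2 h2
  · exact congrArg a (Fin.ext (by simp; omega))
  · exfalso; omega
  · exfalso; omega
  · exact congrArg (fun t => l * a t) (Fin.ext (by simp; omega))

private lemma mul_backDiag_apply {R : Type*} [CommRing R] {n : ℕ}
    (M : Matrix (Fin n) (Fin n) R) (i j : Fin n) :
    (M * backDiag (R := R) n) i j = M i j.rev := by
  rw [Matrix.mul_apply]
  have h : ∀ k : Fin n, M i k * backDiag n k j = if k = j.rev then M i k else 0 := by
    intro k
    have hc : ((k:ℕ) + (j:ℕ) + 1 = n) ↔ (k = j.rev) := by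
      rw [Fin.ext_iff, Fin.val_rev]
      have := j.isLt; have := k.isLt
      omega
    simp only [backDiag, hc]
    split_ifs <;> simp
  rw [Finset.sum_congr rfl (fun k _ => h k), Finset.sum_ite_eq']
  simp

private def revEquiv (n : ℕ) : Equiv.Perm (Fin n) :=
  ⟨Fin.rev, Fin.rev, Fin.rev_rev, Fin.rev_rev⟩

/-- For λ-circulant A, C: A·(C·J) = (C·J)·Aᵀ, equivalently A·J·Cᵀ = C·J·Aᵀ. -/
theorem lamCirc_mul_backDiag_comm {R : Type*} [CommRing R] {n : ℕ} (l : R)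
    (A C : Matrix (Fin n) (Fin n) R)
    (hA : IsLamCirc n l A) (hC : IsLamCirc n l C) :
    A * (C * backDiag n) = (C * backDiag n) * Aᵀ ∧
      A * backDiag n * Cᵀ = C * backDiag n * Aᵀ := by
  obtain ⟨a, rfl⟩ := hA
  obtain ⟨c, rfl⟩ := hC
  constructor
  · ext i j
    rw [Matrix.mul_apply, Matrix.mul_apply]
    have hL : ∀ k : Fin n, lamCirc n l a i k * (lamCirc n l c * backDiag (R := R) n) k j
        = lamCirc n l a i k * lamCirc n l c k j.rev := by
      intro k; rw [mul_backDiag_apply]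
    rw [Finset.sum_congr rfl (fun k _ => hL k)]
    have hR : ∀ k : Fin n, (lamCirc n l c * backDiag (R := R) n) i k * (lamCirc n l a)ᵀ k j
        = lamCirc n l c i k.rev * lamCirc n l a j k := by
      intro k; rw [mul_backDiag_apply, Matrix.transpose_apply]
    rw [Finset.sum_congr rfl (fun k _ => hR k)]
    -- reindex RHS by rev
    rw [Fintype.sum_equiv (revEquiv n)
      (fun k => lamCirc n l c i k.rev * lamCirc n l a j k)
      (fun k => lamCirc n l c i k * lamCirc n l a j k.rev)
      (fun k => by simp [revEquiv, Fin.rev_rev])]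
    have h2 : ∀ k : Fin n, lamCirc n l c i k * lamCirc n l a j k.rev
        = lamCirc n l c i k * lamCirc n l a k j.rev := by
      intro k
      rw [lamCirc_persymm l a j k.rev, Fin.rev_rev]
    rw [Finset.sum_congr rfl (fun k _ => h2 k)]
    have := congrFun (congrFun (lamCirc_comm l a c) i) j.rev
    rw [Matrix.mul_apply, Matrix.mul_apply] at this
    exact this
  · ext i j
    rw [Matrix.mul_apply, Matrix.mul_apply]
    have hL : ∀ k : Fin n, (lamCirc n l a * backDiag (R := R) n) i k * (lamCirc n l c)ᵀ k j
        = lamCirc n l c j k * lamCirc n l a k i.rev := by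
      intro k
      rw [mul_backDiag_apply, Matrix.transpose_apply, lamCirc_persymm l a i k.rev,
        Fin.rev_rev, mul_comm]
    rw [Finset.sum_congr rfl (fun k _ => hL k)]
    have hR : ∀ k : Fin n, (lamCirc n l c * backDiag (R := R) n) i k * (lamCirc n l a)ᵀ k j
        = lamCirc n l a j k * lamCirc n l c k i.rev := by
      intro k
      rw [mul_backDiag_apply, Matrix.transpose_apply, lamCirc_persymm l c i k.rev,
        Fin.rev_rev, mul_comm]
    rw [Finset.sum_congr rfl (fun k _ => hR k)]
    have := congrFun (congrFun (lamCirc_comm l c a) j) i.rev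
    rw [Matrix.mul_apply, Matrix.mul_apply] at this
    exact this
end

section
/- Let R be a commutative ring, n ≥ 1, and let A, B, C, D be λ-circulant n×n matrices over R satisfying A·Aᵀ + B·Bᵀ + C·Cᵀ + D·Dᵀ = -I_n and A·Bᵀ - B·Aᵀ - C·Dᵀ + D·Cᵀ = 0. Let J be the back-diagonal matrix of order n and let M be the 4n×4n block matrix with block rows (A, B, CJ, DJ), (-B, A, DJ, -CJ), (-CJ, -DJ, A, B), (-DJ, CJ, -B, A). Then M·Mᵀ = -I_{4n}. -/
open Matrix Polynomial

section ConstructionIAux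

variable {R : Type*} [CommRing R] {n : ℕ}

lemma backDiag_transpose : (backDiag n (R := R))ᵀ = backDiag n := by
  ext i j
  simp only [transpose_apply, backDiag]
  by_cases h : (i : ℕ) + (j : ℕ) + 1 = n
  · rw [if_pos h, if_pos (by omega)]
  · rw [if_neg h, if_neg (by omega)]

lemma backDiag_mul_self : (backDiag n (R := R)) * backDiag n = 1 := by
  ext i j
  have hi := i.isLt
  have hj := j.isLt
  rw [Matrix.mul_apply, Finset.sum_eq_single (⟨n - 1 - (i : ℕ), by omega⟩ : Fin n)]
  · simp only [backDiag, Matrix.one_apply]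
    by_cases h : i = j
    · subst h
      rw [if_pos (by omega), if_pos (by omega), if_pos rfl, one_mul]
    · have hij : (i : ℕ) ≠ (j : ℕ) := fun hc => h (Fin.ext hc)
      rw [if_pos (by omega), if_neg (by omega), if_neg h, one_mul]
  · intro k _ hk
    have hk' : (k : ℕ) ≠ n - 1 - (i : ℕ) := fun hc => hk (Fin.ext hc)
    simp only [backDiag]
    rw [if_neg (by omega), zero_mul]
  · intro h; exact absurd (Finset.mem_univ _) h

/-- Entry of a λ-circulant via a single ℕ parameter `t = n + j - i ∈ [1, 2n-1]`. -/
def wrapEntry (l : R) (a : Fin n → R) (t : ℕ) : R :=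
  if h : t < n then l * a ⟨t, h⟩
  else if h2 : t - n < n then a ⟨t - n, h2⟩ else 0

lemma wrapEntry_low (l : R) (a : Fin n → R) {t : ℕ} (h : t < n) :
    wrapEntry l a t = l * a ⟨t, h⟩ := dif_pos h

lemma wrapEntry_high (l : R) (a : Fin n → R) {t : ℕ} (h : t < n) :
    wrapEntry l a (t + n) = a ⟨t, h⟩ := by
  unfold wrapEntry
  rw [dif_neg (by omega)]
  simp only [Nat.add_sub_cancel]
  rw [dif_pos h]

lemma lamCirc_apply_wrap (l : R) (a : Fin n → R) (i j : Fin n) :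
    lamCirc n l a i j = wrapEntry l a (n + (j : ℕ) - (i : ℕ)) := by
  have hi := i.isLt
  have hj := j.isLt
  unfold lamCirc wrapEntry
  by_cases h : (i : ℕ) ≤ (j : ℕ)
  · rw [dif_pos h, dif_neg (by omega), dif_pos (by omega)]
    congr 1
    exact Fin.ext (by simp; omega)
  · rw [dif_neg h, dif_pos (by omega)]

lemma wrap_swap (l : R) (a b : Fin n → R) {s1 s2 t1 t2 : ℕ}
    (hs1 : 1 ≤ s1) (hs1' : s1 ≤ 2 * n - 1) (hs2 : 1 ≤ s2) (hs2' : s2 ≤ 2 * n - 1)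
    (ht1 : 1 ≤ t1) (ht1' : t1 ≤ 2 * n - 1) (ht2 : 1 ≤ t2) (ht2' : t2 ≤ 2 * n - 1)
    (h12 : s1 = t2 ∨ s1 = t2 + n ∨ s1 + n = t2)
    (hsum : s1 + s2 = t1 + t2) :
    wrapEntry l a s1 * wrapEntry l b s2 = wrapEntry l b t1 * wrapEntry l a t2 := by
  have hn : 1 ≤ n := by omega
  rcases h12 with h | h | h
  · have h' : s2 = t1 := by omega
    subst h; subst h'
    ring
  · -- s1 = t2 + n, hence t1 = s2 + n
    have h' : t1 = s2 + n := by omega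
    subst h; subst h'
    have ht2n : t2 < n := by omega
    have hs2n : s2 < n := by omega
    rw [wrapEntry_high l a ht2n, wrapEntry_high l b hs2n,
      wrapEntry_low l a ht2n, wrapEntry_low l b hs2n]
    ring
  · -- t2 = s1 + n, hence s2 = t1 + n
    have h' : s2 = t1 + n := by omega
    subst h'
    have h'' : t2 = s1 + n := by omega
    subst h''
    have hs1n : s1 < n := by omega
    have ht1n : t1 < n := by omega
    rw [wrapEntry_high l a hs1n, wrapEntry_high l b ht1n,
      wrapEntry_low l a hs1n, wrapEntry_low l b ht1n]
    ring

lemma mul_backDiag_apply_s4 (hn : 1 ≤ n) (X : Matrix (Fin n) (Fin n) R) (i m : Fin n) :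
    (HMul.hMul (α := Matrix (Fin n) (Fin n) R) X (backDiag n)) i m = X i ⟨n - 1 - (m : ℕ), by omega⟩ := by
  have hm := m.isLt
  rw [Matrix.mul_apply, Finset.sum_eq_single (⟨n - 1 - (m : ℕ), by omega⟩ : Fin n)]
  · simp only [backDiag]
    rw [if_pos (by omega), mul_one]
  · intro k _ hk
    have hk' : (k : ℕ) ≠ n - 1 - (m : ℕ) := fun hc => hk (Fin.ext hc)
    simp only [backDiag]
    rw [if_neg (by omega), mul_zero]
  · intro h; exact absurd (Finset.mem_univ _) h

lemma key_swap (hn : 1 ≤ n) (l : R) (a b : Fin n → R) :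
    lamCirc n l a * backDiag n * (lamCirc n l b)ᵀ
      = lamCirc n l b * backDiag n * (lamCirc n l a)ᵀ := by
  ext i j
  have hi := i.isLt
  have hj := j.isLt
  rw [Matrix.mul_apply, Matrix.mul_apply]
  simp only [transpose_apply, mul_backDiag_apply_s4 hn]
  let σ : Fin n → Fin n := fun m =>
    ⟨if (j : ℕ) + (n - 1 - (m : ℕ)) < (i : ℕ) then (j : ℕ) + (n - 1 - (m : ℕ)) + n - (i : ℕ)
      else if (j : ℕ) + (n - 1 - (m : ℕ)) - (i : ℕ) < n then (j : ℕ) + (n - 1 - (m : ℕ)) - (i : ℕ)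
      else (j : ℕ) + (n - 1 - (m : ℕ)) - (i : ℕ) - n,
      by have := m.isLt; split_ifs <;> omega⟩
  have hσval : ∀ m : Fin n, ((σ m : Fin n) : ℕ) + (i : ℕ) = (j : ℕ) + (n - 1 - (m : ℕ))
      ∨ ((σ m : Fin n) : ℕ) + (i : ℕ) = (j : ℕ) + (n - 1 - (m : ℕ)) + n
      ∨ ((σ m : Fin n) : ℕ) + (i : ℕ) + n = (j : ℕ) + (n - 1 - (m : ℕ)) := by
    intro m
    have hm := m.isLt
    simp only [σ]
    split_ifs <;> omega
  have hσσ : ∀ m, σ (σ m) = m := by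
    intro m
    have hm := m.isLt
    have h1 := hσval m
    have h2 := hσval (σ m)
    have h3 := (σ (σ m)).isLt
    have h4 := (σ m).isLt
    exact Fin.ext (by omega)
  refine Fintype.sum_equiv ⟨σ, σ, hσσ, hσσ⟩ _ _ ?_
  intro m
  have hm := m.isLt
  have hσm := (σ m).isLt
  have hv := hσval m
  simp only [Equiv.coe_fn_mk]
  rw [lamCirc_apply_wrap, lamCirc_apply_wrap, lamCirc_apply_wrap, lamCirc_apply_wrap]
  simp only [Fin.val_mk] at *
  apply wrap_swap <;> omega


end ConstructionIAux

/-- Construction I (short Kharaghani array): the key matrix identity M·Mᵀ = -I. -/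
theorem construction_I_matrix {R : Type*} [CommRing R] {n : ℕ} (hn : 1 ≤ n) (l : R)
    (A B C D : Matrix (Fin n) (Fin n) R)
    (hA : IsLamCirc n l A) (hB : IsLamCirc n l B)
    (hC : IsLamCirc n l C) (hD : IsLamCirc n l D)
    (h1 : A * Aᵀ + B * Bᵀ + C * Cᵀ + D * Dᵀ = -1)
    (h2 : A * Bᵀ - B * Aᵀ - C * Dᵀ + D * Cᵀ = 0) :
    let J : Matrix (Fin n) (Fin n) R := backDiag n
    let M : Matrix ((Fin n ⊕ Fin n) ⊕ (Fin n ⊕ Fin n)) ((Fin n ⊕ Fin n) ⊕ (Fin n ⊕ Fin n)) R :=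
      Matrix.fromBlocks
        (Matrix.fromBlocks A B (-B) A)
        (Matrix.fromBlocks (C * J) (D * J) (D * J) (-(C * J)))
        (Matrix.fromBlocks (-(C * J)) (-(D * J)) (-(D * J)) (C * J))
        (Matrix.fromBlocks A B (-B) A)
    M * Mᵀ = -1 := by
  intro J M
  have JT : Jᵀ = J := backDiag_transpose
  have JJ : J * J = 1 := backDiag_mul_self
  -- (P*J)*(Q*J)ᵀ = P*Qᵀ for arbitrary P Q
  have hmulJ : ∀ P Q : Matrix (Fin n) (Fin n) R, (P * J) * (Q * J)ᵀ = P * Qᵀ := by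
    intro P Q
    rw [transpose_mul, JT, Matrix.mul_assoc, ← Matrix.mul_assoc J, JJ, Matrix.one_mul]
  -- P*(Q*J)ᵀ = (Q*J)*Pᵀ for λ-circulants
  have swap : ∀ P Q : Matrix (Fin n) (Fin n) R, (∃ a, P = lamCirc n l a) →
      (∃ a, Q = lamCirc n l a) → P * (Q * J)ᵀ = (Q * J) * Pᵀ := by
    rintro P Q ⟨p, rfl⟩ ⟨q, rfl⟩
    rw [transpose_mul, JT, ← Matrix.mul_assoc, key_swap hn, Matrix.mul_assoc]
  have hneg1 : ∀ (α β : Type) [Fintype α] [Fintype β] [DecidableEq α] [DecidableEq β],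
      (-1 : Matrix (α ⊕ β) (α ⊕ β) R) = Matrix.fromBlocks (-1) 0 0 (-1) := by
    intro α β _ _ _ _
    rw [← Matrix.fromBlocks_one, Matrix.fromBlocks_neg, neg_zero, neg_zero]
  show Matrix.fromBlocks
        (Matrix.fromBlocks A B (-B) A)
        (Matrix.fromBlocks (C * J) (D * J) (D * J) (-(C * J)))
        (Matrix.fromBlocks (-(C * J)) (-(D * J)) (-(D * J)) (C * J))
        (Matrix.fromBlocks A B (-B) A) *
      (Matrix.fromBlocks
        (Matrix.fromBlocks A B (-B) A)
        (Matrix.fromBlocks (C * J) (D * J) (D * J) (-(C * J)))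
        (Matrix.fromBlocks (-(C * J)) (-(D * J)) (-(D * J)) (C * J))
        (Matrix.fromBlocks A B (-B) A))ᵀ = -1
  have hQopp : Matrix.fromBlocks (-(C * J)) (-(D * J)) (-(D * J)) (C * J)
      = -(Matrix.fromBlocks (C * J) (D * J) (D * J) (-(C * J))) := by
    rw [Matrix.fromBlocks_neg, neg_neg]
  rw [hQopp]
  set P := Matrix.fromBlocks A B (-B) A with hP
  set Q := Matrix.fromBlocks (C * J) (D * J) (D * J) (-(C * J)) with hQ
  have hPQ : P * Qᵀ = Q * Pᵀ := by
    rw [hP, hQ, Matrix.fromBlocks_transpose, Matrix.fromBlocks_transpose,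
      Matrix.fromBlocks_multiply, Matrix.fromBlocks_multiply]
    refine Matrix.fromBlocks_inj.mpr ⟨?_, ?_, ?_, ?_⟩ <;>
      simp only [transpose_neg, mul_neg, neg_mul, neg_neg,
        swap A C hA hC, swap A D hA hD, swap B C hB hC, swap B D hB hD] <;> abel
  have hPPQQ : P * Pᵀ + Q * Qᵀ = -1 := by
    rw [hP, hQ, Matrix.fromBlocks_transpose, Matrix.fromBlocks_transpose,
      Matrix.fromBlocks_multiply, Matrix.fromBlocks_multiply, Matrix.fromBlocks_add,
      hneg1]
    have e2 : -(A * Bᵀ - B * Aᵀ - C * Dᵀ + D * Cᵀ) = 0 := by rw [h2, neg_zero]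
    have e2' : A * Bᵀ - B * Aᵀ - C * Dᵀ + D * Cᵀ = 0 := h2
    refine Matrix.fromBlocks_inj.mpr ⟨?_, ?_, ?_, ?_⟩ <;>
      simp only [transpose_neg, mul_neg, neg_mul, neg_neg, hmulJ]
    · rw [← h1]; abel
    · rw [← e2]; abel
    · rw [← e2']; abel
    · rw [← h1]; abel
  rw [Matrix.fromBlocks_transpose, Matrix.fromBlocks_multiply, hneg1]
  refine Matrix.fromBlocks_inj.mpr ⟨?_, ?_, ?_, ?_⟩
  · exact hPPQQ
  · rw [transpose_neg, mul_neg, hPQ, neg_add_cancel]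
  · rw [neg_mul, hPQ, neg_add_cancel]
  · rw [transpose_neg, mul_neg, neg_mul, neg_neg, ← hPPQQ]; abel
end

section
/- The Gray map φ : (F₂ + uF₂)ⁿ → F₂^{2n}, φ(a + bu) = (b, a + b), preserves duality: for x, y ∈ (F₂ + uF₂)ⁿ, if the Euclidean inner product ⟨x,y⟩ = 0 in F₂ + uF₂, then ⟨φ(x), φ(y)⟩ = 0 in F₂. Consequently, if C is a self-orthogonal linear code over F₂ + uF₂, then φ(C) is a self-orthogonal binary code. -/
open Matrix Polynomial

/-- The Gray map preserves duality: orthogonal vectors map to orthogonal vectors,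
and Gray images of self-orthogonal codes over F₂+uF₂ are self-orthogonal. -/
theorem grayMap_preserves_duality (n : ℕ) :
    let φ : (Fin n → DualNumber (ZMod 2)) → ((Fin n ⊕ Fin n) → ZMod 2) :=
      fun x => Sum.elim (fun i => (x i).snd) (fun i => (x i).fst + (x i).snd)
    (∀ x y : Fin n → DualNumber (ZMod 2),
        (∑ i, x i * y i) = 0 → (∑ k, φ x k * φ y k) = 0) ∧
    (∀ C : Submodule (DualNumber (ZMod 2)) (Fin n → DualNumber (ZMod 2)),
        (∀ x ∈ C, ∀ y ∈ C, (∑ i, x i * y i) = 0) →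
        ∀ x ∈ C, ∀ y ∈ C, (∑ k, φ x k * φ y k) = 0) := by
  intro φ
  have key : ∀ x y : Fin n → DualNumber (ZMod 2),
      (∑ i, x i * y i) = 0 → (∑ k, φ x k * φ y k) = 0 := by
    intro x y h
    have h1 : (∑ i, x i * y i).fst = 0 := by rw [h]; rfl
    have h2 : (∑ i, x i * y i).snd = 0 := by rw [h]; rfl
    simp only [TrivSqZeroExt.fst_sum, TrivSqZeroExt.snd_sum, TrivSqZeroExt.fst_mul,
      TrivSqZeroExt.snd_mul, smul_eq_mul, op_smul_eq_smul] at h1 h2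
    have h3 : ∀ a : ZMod 2, a + a = 0 := by decide
    simp only [φ, Fintype.sum_sum_type, Sum.elim_inl, Sum.elim_inr]
    calc (∑ i, (x i).snd * (y i).snd) + ∑ i, ((x i).fst + (x i).snd) * ((y i).fst + (y i).snd)
        = (∑ i, (x i).fst * (y i).fst)
          + ((∑ i, ((x i).fst * (y i).snd + (y i).fst * (x i).snd))
            + ∑ i, ((x i).snd * (y i).snd + (x i).snd * (y i).snd)) := by
          rw [← Finset.sum_add_distrib, ← Finset.sum_add_distrib, ← Finset.sum_add_distrib]
          congr 1; ext i; ring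
      _ = 0 := by rw [h1, h2]; simp [h3]
  exact ⟨key, fun C hC x hx y hy => key x y (hC x hx y hy)⟩
end
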